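/- Let A, Â be n×n real symmetric matrices, where A has rank exactly K with smallest nonzero eigenvalue magnitude γ_K > 0, let U ∈ ℝ^{n×K} consist of orthonormal eigenvectors of A spanning its column space, and let Û ∈ ℝ^{n×K} consist of orthonormal eigenvectors of Â corresponding to its K largest-magnitude eigenvalues. If ‖Â − A‖ ≤ γ_K/2, then ‖Û Ûᵀ − U Uᵀ‖ ≤ 2 ‖Â − A‖ / γ_K. -/

import Mathlib

open Matrix
open scoped Matrix.Norms.L2Operator

namespace DKaux

lemma dot_self_nonneg {m : Type*} [Fintype m] (v : m → ℝ) : 0 ≤ v ⬝ᵥ v :=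
  Finset.sum_nonneg fun _ _ => mul_self_nonneg _

lemma dot_self_pos {m : Type*} [Fintype m] {v : m → ℝ} (hv : v ≠ 0) : 0 < v ⬝ᵥ v := by
  rcases lt_or_eq_of_le (dot_self_nonneg v) with h | h
  · exact h
  · exact absurd (dotProduct_self_eq_zero.mp h.symm) hv

lemma dot_mv {a b c : Type*} [Fintype a] [Fintype b] [Fintype c]
    (M : Matrix a b ℝ) (N : Matrix a c ℝ)
    (x : b → ℝ) (y : c → ℝ) :
    (M *ᵥ x) ⬝ᵥ (N *ᵥ y) = x ⬝ᵥ ((Mᵀ * N) *ᵥ y) := by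
  rw [Matrix.dotProduct_mulVec, ← Matrix.mulVec_transpose, Matrix.mulVec_mulVec,
    Matrix.dotProduct_mulVec x, ← Matrix.mulVec_transpose, Matrix.transpose_mul,
    Matrix.transpose_transpose]

lemma norm_symm_eq {m : ℕ} (v : Fin m → ℝ) :
    ‖(WithLp.equiv 2 (Fin m → ℝ)).symm v‖ = Real.sqrt (v ⬝ᵥ v) := by
  rw [EuclideanSpace.norm_eq]
  congr 1
  simp [dotProduct, sq, Real.norm_eq_abs, abs_mul_abs_self]

lemma isometry_sq {n k : Type*} [Fintype n] [Fintype k] [DecidableEq k]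
    {W : Matrix n k ℝ} (hW : Wᵀ * W = 1)
    (c : k → ℝ) : (W *ᵥ c) ⬝ᵥ (W *ᵥ c) = c ⬝ᵥ c := by
  rw [dot_mv, hW, Matrix.one_mulVec]

lemma opnorm_le_of_sq {m m' : ℕ} (M : Matrix (Fin m) (Fin m') ℝ) {c : ℝ} (hc : 0 ≤ c)
    (h : ∀ x : Fin m' → ℝ, (M *ᵥ x) ⬝ᵥ (M *ᵥ x) ≤ c ^ 2 * (x ⬝ᵥ x)) : ‖M‖ ≤ c := by
  rw [Matrix.l2_opNorm_def]
  refine ContinuousLinearMap.opNorm_le_bound _ hc fun x => ?_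
  obtain ⟨y, rfl⟩ : ∃ y : Fin m' → ℝ, (WithLp.equiv 2 (Fin m' → ℝ)).symm y = x :=
    ⟨WithLp.equiv _ _ x, rfl⟩
  have h1 : (Matrix.toEuclideanLin ≪≫ₗ LinearMap.toContinuousLinearMap) M
      ((WithLp.equiv 2 (Fin m' → ℝ)).symm y) = (WithLp.equiv 2 (Fin m → ℝ)).symm (M *ᵥ y) := rfl
  rw [h1, norm_symm_eq, norm_symm_eq]
  rw [← Real.sqrt_sq hc, ← Real.sqrt_mul (sq_nonneg c)]
  exact Real.sqrt_le_sqrt (h y)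

lemma sq_le_opnorm {m m' : ℕ} (M : Matrix (Fin m) (Fin m') ℝ) (x : Fin m' → ℝ) :
    (M *ᵥ x) ⬝ᵥ (M *ᵥ x) ≤ ‖M‖ ^ 2 * (x ⬝ᵥ x) := by
  have h0 : ‖(EuclideanSpace.equiv (Fin m) ℝ).symm (M *ᵥ x)‖
      ≤ ‖M‖ * ‖(WithLp.equiv 2 (Fin m' → ℝ)).symm x‖ :=
    Matrix.l2_opNorm_mulVec M ((WithLp.equiv 2 (Fin m' → ℝ)).symm x)
  have h1 : ‖(EuclideanSpace.equiv (Fin m) ℝ).symm (M *ᵥ x)‖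
      = Real.sqrt ((M *ᵥ x) ⬝ᵥ (M *ᵥ x)) := norm_symm_eq _
  rw [h1, norm_symm_eq] at h0
  nlinarith [Real.sq_sqrt (dot_self_nonneg (M *ᵥ x)), Real.sq_sqrt (dot_self_nonneg x),
    Real.sqrt_nonneg ((M *ᵥ x) ⬝ᵥ (M *ᵥ x)), Real.sqrt_nonneg (x ⬝ᵥ x), norm_nonneg M]

lemma sub_proj_dot {n k : ℕ} {W : Matrix (Fin n) (Fin k) ℝ} (hW : Wᵀ * W = 1)
    (y : Fin n → ℝ) :
    (y - (W * Wᵀ) *ᵥ y) ⬝ᵥ (y - (W * Wᵀ) *ᵥ y)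
      = y ⬝ᵥ y - (Wᵀ *ᵥ y) ⬝ᵥ (Wᵀ *ᵥ y) := by
  set a := Wᵀ *ᵥ y with ha
  have h1 : (W * Wᵀ) *ᵥ y = W *ᵥ a := by rw [← Matrix.mulVec_mulVec]
  have h2 : y ⬝ᵥ (W *ᵥ a) = a ⬝ᵥ a := by
    rw [Matrix.dotProduct_mulVec, ← Matrix.mulVec_transpose]
  have h3 : (W *ᵥ a) ⬝ᵥ y = a ⬝ᵥ a := by
    rw [dotProduct_comm]; exact h2
  have h4 : (W *ᵥ a) ⬝ᵥ (W *ᵥ a) = a ⬝ᵥ a := isometry_sq hW a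
  rw [h1, sub_dotProduct, dotProduct_sub, dotProduct_sub, h2, h3, h4]
  ring

lemma proj_contract {n k : ℕ} {W : Matrix (Fin n) (Fin k) ℝ} (hW : Wᵀ * W = 1)
    (y : Fin n → ℝ) : (Wᵀ *ᵥ y) ⬝ᵥ (Wᵀ *ᵥ y) ≤ y ⬝ᵥ y := by
  have h1 := sub_proj_dot hW y
  have h0 := dot_self_nonneg (y - (W * Wᵀ) *ᵥ y)
  linarith

lemma one_sub_proj_contract {n k : ℕ} {W : Matrix (Fin n) (Fin k) ℝ} (hW : Wᵀ * W = 1)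
    (y : Fin n → ℝ) :
    ((1 - W * Wᵀ) *ᵥ y) ⬝ᵥ ((1 - W * Wᵀ) *ᵥ y) ≤ y ⬝ᵥ y := by
  have h1 : (1 - W * Wᵀ) *ᵥ y = y - (W * Wᵀ) *ᵥ y := by
    rw [Matrix.sub_mulVec, Matrix.one_mulVec]
  rw [h1, sub_proj_dot hW y]
  have h0 := dot_self_nonneg (Wᵀ *ᵥ y)
  linarith

lemma diag_dot {k : ℕ} (d c : Fin k → ℝ) :
    (Matrix.diagonal d *ᵥ c) ⬝ᵥ (Matrix.diagonal d *ᵥ c)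
      = ∑ i, (d i * c i) * (d i * c i) := by
  simp only [dotProduct, Matrix.mulVec_diagonal]

lemma diag_dot_lower {k : ℕ} {d : Fin k → ℝ} {b : ℝ} (hb : 0 ≤ b)
    (hd : ∀ i, b ≤ |d i|) (c : Fin k → ℝ) :
    b ^ 2 * (c ⬝ᵥ c) ≤ (Matrix.diagonal d *ᵥ c) ⬝ᵥ (Matrix.diagonal d *ᵥ c) := by
  rw [diag_dot, dotProduct, Finset.mul_sum]
  refine Finset.sum_le_sum fun i _ => ?_
  have h2 : b ^ 2 ≤ d i ^ 2 := by
    have := pow_le_pow_left₀ hb (hd i) 2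
    rwa [sq_abs] at this
  nlinarith [mul_self_nonneg (c i)]

lemma diag_dot_upper {k : ℕ} {d : Fin k → ℝ} {a : ℝ}
    (hd : ∀ i, |d i| ≤ a) (c : Fin k → ℝ) :
    (Matrix.diagonal d *ᵥ c) ⬝ᵥ (Matrix.diagonal d *ᵥ c) ≤ a ^ 2 * (c ⬝ᵥ c) := by
  rw [diag_dot, dotProduct, Finset.mul_sum]
  refine Finset.sum_le_sum fun i _ => ?_
  have h2 : d i ^ 2 ≤ a ^ 2 := by
    have := pow_le_pow_left₀ (abs_nonneg (d i)) (hd i) 2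
    rwa [sq_abs] at this
  nlinarith [mul_self_nonneg (c i)]

lemma exists_mulVec_zero {p q : Type} [Fintype p] [Fintype q] [DecidableEq q]
    (M : Matrix p q ℝ) (h : Fintype.card p < Fintype.card q) :
    ∃ c : q → ℝ, c ≠ 0 ∧ M *ᵥ c = 0 := by
  by_contra hcon
  push_neg at hcon
  have hinj : Function.Injective M.mulVecLin := by
    rw [← LinearMap.ker_eq_bot, LinearMap.ker_eq_bot']
    intro c hc
    by_contra hc0
    exact hcon c hc0 hc
  have := LinearMap.finrank_le_finrank_of_injective hinj
  rw [Module.finrank_fintype_fun_eq_card, Module.finrank_fintype_fun_eq_card] at this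
  omega

lemma diag_opnorm {k : ℕ} {d : Fin k → ℝ} {a : ℝ} (ha : 0 ≤ a)
    (hd : ∀ i, |d i| ≤ a) : ‖Matrix.diagonal d‖ ≤ a :=
  opnorm_le_of_sq _ ha fun c => diag_dot_upper hd c

lemma diag_inv_bound {k : ℕ} {d : Fin k → ℝ} {b : ℝ} (hb : 0 < b)
    (hd : ∀ i, b ≤ |d i|) : ‖Matrix.diagonal (fun i => (d i)⁻¹)‖ ≤ b⁻¹ := by
  refine diag_opnorm (by positivity) fun i => ?_
  rw [abs_inv]
  exact inv_anti₀ hb (hd i)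

lemma diag_ne_zero {k : ℕ} {d : Fin k → ℝ} {b : ℝ} (hb : 0 < b) (hd : ∀ i, b ≤ |d i|) :
    ∀ i, d i ≠ 0 := fun i h0 => by
  have := hd i; rw [h0, abs_zero] at this; linarith

lemma mul_diag_lower {m k : ℕ} (X : Matrix (Fin m) (Fin k) ℝ) {d : Fin k → ℝ} {b : ℝ}
    (hb : 0 < b) (hd : ∀ i, b ≤ |d i|) : b * ‖X‖ ≤ ‖X * Matrix.diagonal d‖ := by
  have hX : X = (X * Matrix.diagonal d) * Matrix.diagonal (fun i => (d i)⁻¹) := by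
    rw [Matrix.mul_assoc, Matrix.diagonal_mul_diagonal,
      show (fun i => d i * (d i)⁻¹) = fun _ => (1:ℝ) from
        funext fun i => mul_inv_cancel₀ (diag_ne_zero hb hd i),
      Matrix.diagonal_one, Matrix.mul_one]
  have h1 : ‖X‖ ≤ ‖X * Matrix.diagonal d‖ * b⁻¹ := by
    calc ‖X‖ = ‖(X * Matrix.diagonal d) * Matrix.diagonal (fun i => (d i)⁻¹)‖ := by rw [← hX]
    _ ≤ ‖X * Matrix.diagonal d‖ * ‖Matrix.diagonal (fun i => (d i)⁻¹)‖ :=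
        Matrix.l2_opNorm_mul _ _
    _ ≤ ‖X * Matrix.diagonal d‖ * b⁻¹ :=
        mul_le_mul_of_nonneg_left (diag_inv_bound hb hd) (norm_nonneg _)
  have hb' : b⁻¹ * b = 1 := inv_mul_cancel₀ (ne_of_gt hb)
  nlinarith [norm_nonneg (X * Matrix.diagonal d)]

lemma diag_mul_lower {m k : ℕ} (Y : Matrix (Fin k) (Fin m) ℝ) {d : Fin k → ℝ} {b : ℝ}
    (hb : 0 < b) (hd : ∀ i, b ≤ |d i|) : b * ‖Y‖ ≤ ‖Matrix.diagonal d * Y‖ := by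
  have hY : Y = Matrix.diagonal (fun i => (d i)⁻¹) * (Matrix.diagonal d * Y) := by
    rw [← Matrix.mul_assoc, Matrix.diagonal_mul_diagonal,
      show (fun i => (d i)⁻¹ * d i) = fun _ => (1:ℝ) from
        funext fun i => inv_mul_cancel₀ (diag_ne_zero hb hd i),
      Matrix.diagonal_one, Matrix.one_mul]
  have h1 : ‖Y‖ ≤ b⁻¹ * ‖Matrix.diagonal d * Y‖ := by
    calc ‖Y‖ = ‖Matrix.diagonal (fun i => (d i)⁻¹) * (Matrix.diagonal d * Y)‖ := by rw [← hY]
    _ ≤ ‖Matrix.diagonal (fun i => (d i)⁻¹)‖ * ‖Matrix.diagonal d * Y‖ :=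
        Matrix.l2_opNorm_mul _ _
    _ ≤ b⁻¹ * ‖Matrix.diagonal d * Y‖ :=
        mul_le_mul_of_nonneg_right (diag_inv_bound hb hd) (norm_nonneg _)
  have hb' : b⁻¹ * b = 1 := inv_mul_cancel₀ (ne_of_gt hb)
  nlinarith [norm_nonneg (Matrix.diagonal d * Y)]

lemma lmul_le {n k m : ℕ} {W : Matrix (Fin n) (Fin k) ℝ} (hW : Wᵀ * W = 1)
    (M : Matrix (Fin k) (Fin m) ℝ) : ‖W * M‖ ≤ ‖M‖ := by
  refine opnorm_le_of_sq _ (norm_nonneg M) fun x => ?_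
  rw [← Matrix.mulVec_mulVec, isometry_sq hW]
  exact sq_le_opnorm M x

lemma rmul_le {n k m : ℕ} {U : Matrix (Fin n) (Fin k) ℝ} (hU : Uᵀ * U = 1)
    (M : Matrix (Fin m) (Fin n) ℝ) : ‖M * U‖ ≤ ‖M‖ := by
  refine opnorm_le_of_sq _ (norm_nonneg M) fun x => ?_
  rw [← Matrix.mulVec_mulVec]
  calc (M *ᵥ (U *ᵥ x)) ⬝ᵥ (M *ᵥ (U *ᵥ x)) ≤ ‖M‖ ^ 2 * ((U *ᵥ x) ⬝ᵥ (U *ᵥ x)) :=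
      sq_le_opnorm M _
  _ = ‖M‖ ^ 2 * (x ⬝ᵥ x) := by rw [isometry_sq hU]

lemma lmulT_le {n k m : ℕ} {W : Matrix (Fin n) (Fin k) ℝ} (hW : Wᵀ * W = 1)
    (M : Matrix (Fin n) (Fin m) ℝ) : ‖Wᵀ * M‖ ≤ ‖M‖ := by
  refine opnorm_le_of_sq _ (norm_nonneg M) fun x => ?_
  rw [← Matrix.mulVec_mulVec]
  calc (Wᵀ *ᵥ (M *ᵥ x)) ⬝ᵥ (Wᵀ *ᵥ (M *ᵥ x)) ≤ (M *ᵥ x) ⬝ᵥ (M *ᵥ x) :=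
      proj_contract hW _
  _ ≤ ‖M‖ ^ 2 * (x ⬝ᵥ x) := sq_le_opnorm M x

lemma rmulT_le {n k m : ℕ} {U : Matrix (Fin n) (Fin k) ℝ} (hU : Uᵀ * U = 1)
    (M : Matrix (Fin m) (Fin k) ℝ) : ‖M * Uᵀ‖ ≤ ‖M‖ := by
  refine opnorm_le_of_sq _ (norm_nonneg M) fun x => ?_
  rw [← Matrix.mulVec_mulVec]
  calc (M *ᵥ (Uᵀ *ᵥ x)) ⬝ᵥ (M *ᵥ (Uᵀ *ᵥ x)) ≤ ‖M‖ ^ 2 * ((Uᵀ *ᵥ x) ⬝ᵥ (Uᵀ *ᵥ x)) :=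
      sq_le_opnorm M _
  _ ≤ ‖M‖ ^ 2 * (x ⬝ᵥ x) :=
      mul_le_mul_of_nonneg_left (proj_contract hU x) (sq_nonneg _)

lemma lproj_le {n k m : ℕ} {W : Matrix (Fin n) (Fin k) ℝ} (hW : Wᵀ * W = 1)
    (M : Matrix (Fin n) (Fin m) ℝ) : ‖(1 - W * Wᵀ) * M‖ ≤ ‖M‖ := by
  refine opnorm_le_of_sq _ (norm_nonneg M) fun x => ?_
  rw [← Matrix.mulVec_mulVec]
  calc ((1 - W * Wᵀ) *ᵥ (M *ᵥ x)) ⬝ᵥ ((1 - W * Wᵀ) *ᵥ (M *ᵥ x)) ≤ (M *ᵥ x) ⬝ᵥ (M *ᵥ x) :=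
      one_sub_proj_contract hW _
  _ ≤ ‖M‖ ^ 2 * (x ⬝ᵥ x) := sq_le_opnorm M x

lemma rproj_le {n k m : ℕ} {U : Matrix (Fin n) (Fin k) ℝ} (hU : Uᵀ * U = 1)
    (M : Matrix (Fin m) (Fin n) ℝ) : ‖M * (1 - U * Uᵀ)‖ ≤ ‖M‖ := by
  refine opnorm_le_of_sq _ (norm_nonneg M) fun x => ?_
  rw [← Matrix.mulVec_mulVec]
  calc (M *ᵥ ((1 - U * Uᵀ) *ᵥ x)) ⬝ᵥ (M *ᵥ ((1 - U * Uᵀ) *ᵥ x))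
      ≤ ‖M‖ ^ 2 * (((1 - U * Uᵀ) *ᵥ x) ⬝ᵥ ((1 - U * Uᵀ) *ᵥ x)) := sq_le_opnorm M _
  _ ≤ ‖M‖ ^ 2 * (x ⬝ᵥ x) :=
      mul_le_mul_of_nonneg_left (one_sub_proj_contract hU x) (sq_nonneg _)

lemma sqrt_dot_triangle {m : ℕ} (u v : Fin m → ℝ) :
    Real.sqrt ((u + v) ⬝ᵥ (u + v)) ≤ Real.sqrt (u ⬝ᵥ u) + Real.sqrt (v ⬝ᵥ v) := by
  rw [← norm_symm_eq, ← norm_symm_eq, ← norm_symm_eq]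
  have : (WithLp.equiv 2 (Fin m → ℝ)).symm (u + v)
      = (WithLp.equiv 2 (Fin m → ℝ)).symm u + (WithLp.equiv 2 (Fin m → ℝ)).symm v := rfl
  rw [this]
  exact norm_add_le _ _



lemma mul_subcol {a b c : ℕ} (M : Matrix (Fin a) (Fin b) ℝ) (N : Matrix (Fin b) (Fin c) ℝ)
    (j : Fin c) :
    M * (N.submatrix id (fun _ : Fin 1 => j)) = (M * N).submatrix id (fun _ : Fin 1 => j) := by
  ext u v; simp [Matrix.mul_apply]

lemma subcol_one {a c : ℕ} {M : Matrix (Fin a) (Fin c) ℝ} (hM : Mᵀ * M = 1) (j : Fin c) :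
    (M.submatrix id (fun _ : Fin 1 => j))ᵀ * (M.submatrix id (fun _ : Fin 1 => j)) = 1 := by
  ext u v
  have h0 : (Mᵀ * M) j j = 1 := by rw [hM]; simp [Matrix.one_apply]
  rw [Matrix.mul_apply] at h0
  have huv : u = v := Subsingleton.elim u v
  subst huv
  rw [Matrix.mul_apply]
  simpa [Matrix.one_apply] using h0

lemma one_subcol_mulVec {c : ℕ} (j : Fin c) (d : Fin 1 → ℝ) :
    ((1 : Matrix (Fin c) (Fin c) ℝ).submatrix id (fun _ : Fin 1 => j)) *ᵥ d
      = fun i => if i = j then d 0 else 0 := by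
  funext i
  by_cases h : i = j <;> simp [Matrix.mulVec, dotProduct, Matrix.one_apply, h]

lemma single_diag_dot {c : ℕ} (dv : Fin c → ℝ) (j : Fin c) (t : ℝ) :
    (Matrix.diagonal dv *ᵥ (fun i => if i = j then t else 0)) ⬝ᵥ
      (Matrix.diagonal dv *ᵥ (fun i => if i = j then t else 0)) = (dv j * t) * (dv j * t) := by
  rw [diag_dot]
  rw [Finset.sum_eq_single j]
  · simp
  · intro b _ hb; simp [hb]
  · intro h; exact absurd (Finset.mem_univ j) h


end DKaux

set_option maxHeartbeats 1000000

/-- Davis–Kahan-type bound: let `A = U diag(D) Uᵀ` be symmetric of rank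
`K` with all its nonzero eigenvalues of magnitude at least `γK > 0` (`U` has orthonormal
columns), and let `Â` be symmetric with eigendecomposition
`Â = Û diag(D̂) Ûᵀ + V diag(E) Vᵀ`, where `Û` carries the `K` largest-magnitude
eigenvalues (`|E j| ≤ |D̂ k|` for all `j, k`), `Ûᵀ Û = I`, `Vᵀ V = I`, `Ûᵀ V = 0`.
If `‖Â − A‖ ≤ γK/2` then `‖Û Ûᵀ − U Uᵀ‖ ≤ 2 ‖Â − A‖ / γK`. -/
theorem davis_kahan_projection_bound (n K : ℕ)
    (A Ah : Matrix (Fin n) (Fin n) ℝ) (hA : A.IsSymm) (hAh : Ah.IsSymm)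
    (γK : ℝ) (hγK : 0 < γK)
    (U : Matrix (Fin n) (Fin K) ℝ) (D : Fin K → ℝ)
    (hU : Uᵀ * U = 1) (hAU : A = U * Matrix.diagonal D * Uᵀ)
    (hD : ∀ k, γK ≤ |D k|)
    (Uh : Matrix (Fin n) (Fin K) ℝ) (Dh : Fin K → ℝ)
    (V : Matrix (Fin n) (Fin (n - K)) ℝ) (E : Fin (n - K) → ℝ)
    (hUh : Uhᵀ * Uh = 1) (hV : Vᵀ * V = 1) (hUhV : Uhᵀ * V = 0)
    (hAhDecomp : Ah = Uh * Matrix.diagonal Dh * Uhᵀ + V * Matrix.diagonal E * Vᵀ)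
    (hTop : ∀ j k, |E j| ≤ |Dh k|)
    (hclose : ‖Ah - A‖ ≤ γK / 2) :
    ‖Uh * Uhᵀ - U * Uᵀ‖ ≤ 2 * ‖Ah - A‖ / γK := by
  classical
  set ε := ‖Ah - A‖ with hεdef
  have hε0 : 0 ≤ ε := norm_nonneg _
  have hVUh : Vᵀ * Uh = 0 := by
    have h := congrArg Matrix.transpose hUhV
    rwa [Matrix.transpose_mul, Matrix.transpose_zero, Matrix.transpose_transpose] at h
  have hγε : 0 < γK - ε := by linarith
  -- the key decomposition of ‖Ah x‖²
  have keyAh : ∀ x : Fin n → ℝ, (Ah *ᵥ x) ⬝ᵥ (Ah *ᵥ x)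
      = (Matrix.diagonal Dh *ᵥ (Uhᵀ *ᵥ x)) ⬝ᵥ (Matrix.diagonal Dh *ᵥ (Uhᵀ *ᵥ x))
      + (Matrix.diagonal E *ᵥ (Vᵀ *ᵥ x)) ⬝ᵥ (Matrix.diagonal E *ᵥ (Vᵀ *ᵥ x)) := by
    intro x
    set p := Matrix.diagonal Dh *ᵥ (Uhᵀ *ᵥ x) with hp
    set q := Matrix.diagonal E *ᵥ (Vᵀ *ᵥ x) with hq
    have hsplit : Ah *ᵥ x = Uh *ᵥ p + V *ᵥ q := by
      rw [hAhDecomp, Matrix.add_mulVec, hp, hq,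
        Matrix.mulVec_mulVec, Matrix.mulVec_mulVec, Matrix.mulVec_mulVec, Matrix.mulVec_mulVec]
    have t1 : (Uh *ᵥ p) ⬝ᵥ (Uh *ᵥ p) = p ⬝ᵥ p := DKaux.isometry_sq hUh p
    have t2 : (Uh *ᵥ p) ⬝ᵥ (V *ᵥ q) = 0 := by
      rw [DKaux.dot_mv, hUhV, Matrix.zero_mulVec, dotProduct_zero]
    have t3 : (V *ᵥ q) ⬝ᵥ (Uh *ᵥ p) = 0 := by
      rw [DKaux.dot_mv, hVUh, Matrix.zero_mulVec, dotProduct_zero]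
    have t4 : (V *ᵥ q) ⬝ᵥ (V *ᵥ q) = q ⬝ᵥ q := DKaux.isometry_sq hV q
    rw [hsplit, add_dotProduct, dotProduct_add, dotProduct_add, t1, t2, t3, t4]
    ring
  ---- STEP A : |E j| ≤ ε
  have hE : ∀ j, |E j| ≤ ε := by
    intro j
    by_contra hj
    push_neg at hj
    set Vj : Matrix (Fin n) (Fin 1) ℝ := V.submatrix id (fun _ => j) with hVjdef
    have hUhVj : Uhᵀ * Vj = 0 := by
      rw [hVjdef, DKaux.mul_subcol, hUhV]
      ext u v; simp
    have hVjVj : Vjᵀ * Vj = 1 := DKaux.subcol_one hV j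
    have hVjUh : Vjᵀ * Uh = 0 := by
      have h := congrArg Matrix.transpose hUhVj
      rwa [Matrix.transpose_mul, Matrix.transpose_zero, Matrix.transpose_transpose] at h
    set S := Matrix.fromCols Uh Vj with hSdef
    have hSS : Sᵀ * S = 1 := by
      rw [hSdef, Matrix.transpose_fromCols, Matrix.fromRows_mul_fromCols,
        hUh, hUhVj, hVjUh, hVjVj, Matrix.fromBlocks_one]
    obtain ⟨c, hc0, hc⟩ := DKaux.exists_mulVec_zero (Uᵀ * S)
      (by simp only [Fintype.card_sum, Fintype.card_fin]; omega)
    set c₁ : Fin K → ℝ := fun a => c (Sum.inl a) with hc1def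
    set c₂ : Fin 1 → ℝ := fun b => c (Sum.inr b) with hc2def
    have hcelim : c = Sum.elim c₁ c₂ := by funext z; cases z <;> rfl
    set x := S *ᵥ c with hxdef
    have hxx : x ⬝ᵥ x = c ⬝ᵥ c := DKaux.isometry_sq hSS c
    have hccpos : 0 < c ⬝ᵥ c := DKaux.dot_self_pos hc0
    have hUx : Uᵀ *ᵥ x = 0 := by rw [hxdef, Matrix.mulVec_mulVec, hc]
    have hAx : A *ᵥ x = 0 := by
      rw [hAU, ← Matrix.mulVec_mulVec, hUx, Matrix.mulVec_zero]
    have hAhAx : Ah *ᵥ x = (Ah - A) *ᵥ x := by rw [Matrix.sub_mulVec, hAx, sub_zero]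
    have hUhx : Uhᵀ *ᵥ x = c₁ := by
      rw [hxdef, Matrix.mulVec_mulVec, hSdef, Matrix.mul_fromCols, hUh, hUhVj, hcelim,
        Matrix.fromCols_mulVec_sumElim, Matrix.one_mulVec, Matrix.zero_mulVec, add_zero]
    have hVx : Vᵀ *ᵥ x = fun i => if i = j then c₂ 0 else 0 := by
      rw [hxdef, Matrix.mulVec_mulVec, hSdef, Matrix.mul_fromCols, hVUh, hVjdef,
        DKaux.mul_subcol, hV, hcelim, Matrix.fromCols_mulVec_sumElim,
        Matrix.zero_mulVec, zero_add, DKaux.one_subcol_mulVec]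
    have hqq : (Matrix.diagonal E *ᵥ (Vᵀ *ᵥ x)) ⬝ᵥ (Matrix.diagonal E *ᵥ (Vᵀ *ᵥ x))
        = (E j * c₂ 0) * (E j * c₂ 0) := by
      rw [hVx]; exact DKaux.single_diag_dot E j (c₂ 0)
    have hpp : |E j| ^ 2 * (c₁ ⬝ᵥ c₁)
        ≤ (Matrix.diagonal Dh *ᵥ (Uhᵀ *ᵥ x)) ⬝ᵥ (Matrix.diagonal Dh *ᵥ (Uhᵀ *ᵥ x)) := by
      rw [hUhx]; exact DKaux.diag_dot_lower (abs_nonneg _) (fun i => hTop j i) c₁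
    have hup : (Ah *ᵥ x) ⬝ᵥ (Ah *ᵥ x) ≤ ε ^ 2 * (x ⬝ᵥ x) := by
      rw [hAhAx, hεdef]; exact DKaux.sq_le_opnorm _ x
    have hkey := keyAh x
    have hcc : c ⬝ᵥ c = c₁ ⬝ᵥ c₁ + c₂ ⬝ᵥ c₂ := by
      rw [hcelim]; simp [dotProduct, Fintype.sum_sum_type]
    have hc2dot : c₂ ⬝ᵥ c₂ = c₂ 0 * c₂ 0 := by simp [dotProduct]
    have habs : |E j| ^ 2 = E j * E j := by rw [sq_abs]; ring
    have hEq : |E j| ^ 2 * (c₂ ⬝ᵥ c₂) = (E j * c₂ 0) * (E j * c₂ 0) := by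
      rw [hc2dot, habs]; ring
    have hup2 : (Matrix.diagonal Dh *ᵥ (Uhᵀ *ᵥ x)) ⬝ᵥ (Matrix.diagonal Dh *ᵥ (Uhᵀ *ᵥ x))
        + (Matrix.diagonal E *ᵥ (Vᵀ *ᵥ x)) ⬝ᵥ (Matrix.diagonal E *ᵥ (Vᵀ *ᵥ x))
        ≤ ε ^ 2 * (c ⬝ᵥ c) := by
      rw [← hkey, ← hxx]; exact hup
    rw [hcc, mul_add] at hup2
    have hstep : |E j| ^ 2 * (c ⬝ᵥ c) ≤ ε ^ 2 * (c ⬝ᵥ c) := by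
      rw [hcc, mul_add, mul_add]
      linarith [hpp, hup2, hEq, hqq]
    have h1 : ε ^ 2 < |E j| ^ 2 := by nlinarith
    have h2 := mul_lt_mul_of_pos_right h1 hccpos
    linarith
  ---- STEP B : γK - ε ≤ |Dh k|
  have hDh : ∀ k, γK - ε ≤ |Dh k| := by
    intro k
    by_contra hk
    push_neg at hk
    set Uhk : Matrix (Fin n) (Fin 1) ℝ := Uh.submatrix id (fun _ => k) with hUhkdef
    have hVUhk : Vᵀ * Uhk = 0 := by
      rw [hUhkdef, DKaux.mul_subcol, hVUh]
      ext u v; simp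
    have hUhkUhk : Uhkᵀ * Uhk = 1 := DKaux.subcol_one hUh k
    have hUhkV : Uhkᵀ * V = 0 := by
      have h := congrArg Matrix.transpose hVUhk
      rwa [Matrix.transpose_mul, Matrix.transpose_zero, Matrix.transpose_transpose] at h
    set S := Matrix.fromCols V Uhk with hSdef
    have hSS : Sᵀ * S = 1 := by
      rw [hSdef, Matrix.transpose_fromCols, Matrix.fromRows_mul_fromCols,
        hV, hVUhk, hUhkV, hUhkUhk, Matrix.fromBlocks_one]
    obtain ⟨w, hw0, hw⟩ := DKaux.exists_mulVec_zero (Matrix.fromCols U S)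
      (by simp only [Fintype.card_sum, Fintype.card_fin]; omega)
    set c : Fin K → ℝ := fun a => w (Sum.inl a) with hcdef
    set d : (Fin (n - K) ⊕ Fin 1) → ℝ := fun b => -(w (Sum.inr b)) with hddef
    have hwelim : w = Sum.elim c (-d) := by
      funext z; cases z
      · rfl
      · simp [hddef]
    have hsum : U *ᵥ c + S *ᵥ (-d) = 0 := by
      rw [← Matrix.fromCols_mulVec_sumElim, ← hwelim, hw]
    have hUcSd : U *ᵥ c = S *ᵥ d := by
      rw [Matrix.mulVec_neg] at hsum
      have := sub_eq_zero.mpr (rfl : S *ᵥ d = S *ᵥ d)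
      funext i
      have h := congrFun hsum i
      simp only [Pi.add_apply, Pi.neg_apply, Pi.zero_apply] at h
      linarith
    set x := U *ᵥ c with hxdef
    have hxxc : x ⬝ᵥ x = c ⬝ᵥ c := DKaux.isometry_sq hU c
    have hxxd : x ⬝ᵥ x = d ⬝ᵥ d := by
      rw [hUcSd]; exact DKaux.isometry_sq hSS d
    have hx0 : x ≠ 0 := by
      intro h0
      apply hw0
      have hcz : c = 0 := by
        apply dotProduct_self_eq_zero.mp
        rw [← hxxc, h0]; simp [dotProduct]
      have hdz : d = 0 := by
        apply dotProduct_self_eq_zero.mp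
        rw [← hxxd, h0]; simp [dotProduct]
      rw [hwelim, hcz, hdz]
      funext z; cases z <;> simp
    have hxxpos : 0 < x ⬝ᵥ x := DKaux.dot_self_pos hx0
    -- lower bound on ‖A x‖²
    have hAx : A *ᵥ x = U *ᵥ (Matrix.diagonal D *ᵥ c) := by
      rw [hAU, hxdef, Matrix.mulVec_mulVec, Matrix.mul_assoc (U * Matrix.diagonal D), hU,
        Matrix.mul_one, ← Matrix.mulVec_mulVec]
    have hAxlow : γK ^ 2 * (x ⬝ᵥ x) ≤ (A *ᵥ x) ⬝ᵥ (A *ᵥ x) := by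
      have h1 : (A *ᵥ x) ⬝ᵥ (A *ᵥ x)
          = (Matrix.diagonal D *ᵥ c) ⬝ᵥ (Matrix.diagonal D *ᵥ c) := by
        rw [hAx]; exact DKaux.isometry_sq hU _
      rw [h1, hxxc]
      exact DKaux.diag_dot_lower (le_of_lt hγK) hD c
    -- components of x in the hat basis
    set d₁ : Fin (n - K) → ℝ := fun a => d (Sum.inl a) with hd1def
    set d₂ : Fin 1 → ℝ := fun b => d (Sum.inr b) with hd2def
    have hdelim : d = Sum.elim d₁ d₂ := by funext z; cases z <;> rfl
    have hUhx : Uhᵀ *ᵥ x = fun i => if i = k then d₂ 0 else 0 := by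
      rw [hUcSd, Matrix.mulVec_mulVec, hSdef, Matrix.mul_fromCols, hUhV, hUhkdef,
        DKaux.mul_subcol, hUh, hdelim, Matrix.fromCols_mulVec_sumElim,
        Matrix.zero_mulVec, zero_add, DKaux.one_subcol_mulVec]
    have hVx : Vᵀ *ᵥ x = d₁ := by
      rw [hUcSd, Matrix.mulVec_mulVec, hSdef, Matrix.mul_fromCols, hV, hVUhk,
        hdelim, Matrix.fromCols_mulVec_sumElim, Matrix.one_mulVec, Matrix.zero_mulVec,
        add_zero]
    have hd1n := DKaux.dot_self_nonneg d₁
    have hd2dot : d₂ ⬝ᵥ d₂ = d₂ 0 * d₂ 0 := by simp [dotProduct]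
    have hdd : d ⬝ᵥ d = d₁ ⬝ᵥ d₁ + d₂ ⬝ᵥ d₂ := by
      rw [hdelim]; simp [dotProduct, Fintype.sum_sum_type]
    have hpp : (Matrix.diagonal Dh *ᵥ (Uhᵀ *ᵥ x)) ⬝ᵥ (Matrix.diagonal Dh *ᵥ (Uhᵀ *ᵥ x))
        = (Dh k * d₂ 0) * (Dh k * d₂ 0) := by
      rw [hUhx]; exact DKaux.single_diag_dot Dh k (d₂ 0)
    have hqq : (Matrix.diagonal E *ᵥ (Vᵀ *ᵥ x)) ⬝ᵥ (Matrix.diagonal E *ᵥ (Vᵀ *ᵥ x))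
        ≤ |Dh k| ^ 2 * (d₁ ⬝ᵥ d₁) := by
      rw [hVx]; exact DKaux.diag_dot_upper (fun i => hTop i k) d₁
    have hAhup : (Ah *ᵥ x) ⬝ᵥ (Ah *ᵥ x) ≤ |Dh k| ^ 2 * (x ⬝ᵥ x) := by
      have habs2 : (Dh k * d₂ 0) * (Dh k * d₂ 0) ≤ |Dh k| ^ 2 * (d₂ ⬝ᵥ d₂) := by
        rw [hd2dot, sq_abs]
        exact le_of_eq (by ring)
      calc (Ah *ᵥ x) ⬝ᵥ (Ah *ᵥ x)
          = (Matrix.diagonal Dh *ᵥ (Uhᵀ *ᵥ x)) ⬝ᵥ (Matrix.diagonal Dh *ᵥ (Uhᵀ *ᵥ x))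
            + (Matrix.diagonal E *ᵥ (Vᵀ *ᵥ x)) ⬝ᵥ (Matrix.diagonal E *ᵥ (Vᵀ *ᵥ x)) := keyAh x
      _ = (Dh k * d₂ 0) * (Dh k * d₂ 0)
            + (Matrix.diagonal E *ᵥ (Vᵀ *ᵥ x)) ⬝ᵥ (Matrix.diagonal E *ᵥ (Vᵀ *ᵥ x)) := by
          rw [hpp]
      _ ≤ |Dh k| ^ 2 * (d₂ ⬝ᵥ d₂) + |Dh k| ^ 2 * (d₁ ⬝ᵥ d₁) := add_le_add habs2 hqq
      _ = |Dh k| ^ 2 * (d ⬝ᵥ d) := by rw [hdd]; ring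
      _ = |Dh k| ^ 2 * (x ⬝ᵥ x) := by rw [hxxd]
    -- norms
    set s := Real.sqrt (x ⬝ᵥ x) with hsdef
    have hspos : 0 < s := Real.sqrt_pos.mpr hxxpos
    have hNA : γK * s ≤ Real.sqrt ((A *ᵥ x) ⬝ᵥ (A *ᵥ x)) := by
      have h1 := Real.sqrt_le_sqrt hAxlow
      rwa [Real.sqrt_mul (sq_nonneg γK), Real.sqrt_sq (le_of_lt hγK)] at h1
    have hNAh : Real.sqrt ((Ah *ᵥ x) ⬝ᵥ (Ah *ᵥ x)) ≤ |Dh k| * s := by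
      have h1 := Real.sqrt_le_sqrt hAhup
      rwa [Real.sqrt_mul (sq_nonneg _), Real.sqrt_sq (abs_nonneg _)] at h1
    have hND : Real.sqrt (((Ah - A) *ᵥ x) ⬝ᵥ ((Ah - A) *ᵥ x)) ≤ ε * s := by
      have h0 : ((Ah - A) *ᵥ x) ⬝ᵥ ((Ah - A) *ᵥ x) ≤ ε ^ 2 * (x ⬝ᵥ x) := by
        rw [hεdef]; exact DKaux.sq_le_opnorm _ x
      have h1 := Real.sqrt_le_sqrt h0
      rwa [Real.sqrt_mul (sq_nonneg ε), Real.sqrt_sq hε0] at h1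
    have htri : Real.sqrt ((A *ᵥ x) ⬝ᵥ (A *ᵥ x))
        ≤ Real.sqrt ((Ah *ᵥ x) ⬝ᵥ (Ah *ᵥ x))
          + Real.sqrt (((Ah - A) *ᵥ x) ⬝ᵥ ((Ah - A) *ᵥ x)) := by
      have h1 : A *ᵥ x = Ah *ᵥ x + -((Ah - A) *ᵥ x) := by
        rw [Matrix.sub_mulVec]; abel
      have h2 := DKaux.sqrt_dot_triangle (Ah *ᵥ x) (-((Ah - A) *ᵥ x))
      rw [← h1] at h2
      have h3 : (-((Ah - A) *ᵥ x)) ⬝ᵥ (-((Ah - A) *ᵥ x))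
          = ((Ah - A) *ᵥ x) ⬝ᵥ ((Ah - A) *ᵥ x) := by
        rw [neg_dotProduct, dotProduct_neg, neg_neg]
      rwa [h3] at h2
    have hcontr : γK * s ≤ |Dh k| * s + ε * s := by
      calc γK * s ≤ _ := hNA
      _ ≤ _ := htri
      _ ≤ |Dh k| * s + ε * s := add_le_add hNAh hND
    have hlt : |Dh k| * s < (γK - ε) * s := mul_lt_mul_of_pos_right hk hspos
    have hexp : (γK - ε) * s = γK * s - ε * s := by ring
    linarith [hcontr, hlt, hexp]
  -- cancellation rewrite rules
  have rUU : ∀ {m : ℕ} (M : Matrix (Fin K) (Fin m) ℝ), Uᵀ * (U * M) = M := fun M => by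
    rw [← Matrix.mul_assoc, hU, Matrix.one_mul]
  have rUhUh : ∀ {m : ℕ} (M : Matrix (Fin K) (Fin m) ℝ), Uhᵀ * (Uh * M) = M := fun M => by
    rw [← Matrix.mul_assoc, hUh, Matrix.one_mul]
  have rVV : ∀ {m : ℕ} (M : Matrix (Fin (n - K)) (Fin m) ℝ), Vᵀ * (V * M) = M := fun M => by
    rw [← Matrix.mul_assoc, hV, Matrix.one_mul]
  have rUhV : ∀ {m : ℕ} (M : Matrix (Fin (n - K)) (Fin m) ℝ), Uhᵀ * (V * M) = 0 := fun M => by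
    rw [← Matrix.mul_assoc, hUhV, Matrix.zero_mul]
  have rVUh : ∀ {m : ℕ} (M : Matrix (Fin K) (Fin m) ℝ), Vᵀ * (Uh * M) = 0 := fun M => by
    rw [← Matrix.mul_assoc, hVUh, Matrix.zero_mul]
  ---- STEP C : bound on X = Vᵀ U
  have hsylC : Vᵀ * (Ah - A) * U
      = Matrix.diagonal E * (Vᵀ * U) - (Vᵀ * U) * Matrix.diagonal D := by
    rw [hAhDecomp, hAU]
    simp only [Matrix.mul_sub, Matrix.sub_mul, Matrix.mul_add, Matrix.add_mul,
      Matrix.mul_assoc, rUU, rUhUh, rVV, rUhV, rVUh, hU, hUh, hV, hUhV, hVUh,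
      Matrix.mul_one, Matrix.one_mul, Matrix.mul_zero, Matrix.zero_mul,
      zero_add, add_zero, zero_sub, sub_zero]
  have hRband : ‖Vᵀ * (Ah - A) * U‖ ≤ ε := by
    rw [hεdef]
    calc ‖Vᵀ * (Ah - A) * U‖ ≤ ‖Vᵀ * (Ah - A)‖ := DKaux.rmul_le hU _
    _ ≤ ‖Ah - A‖ := DKaux.lmulT_le hV _
  have hdEnorm : ‖Matrix.diagonal E‖ ≤ ε := DKaux.diag_opnorm hε0 hE
  have hXlow : γK * ‖Vᵀ * U‖ ≤ ‖(Vᵀ * U) * Matrix.diagonal D‖ :=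
    DKaux.mul_diag_lower (Vᵀ * U) hγK hD
  have hXup : ‖(Vᵀ * U) * Matrix.diagonal D‖ ≤ ε * ‖Vᵀ * U‖ + ε := by
    have h2 : (Vᵀ * U) * Matrix.diagonal D
        = Matrix.diagonal E * (Vᵀ * U) - Vᵀ * (Ah - A) * U := by
      rw [hsylC, sub_sub_cancel]
    rw [h2]
    calc ‖Matrix.diagonal E * (Vᵀ * U) - Vᵀ * (Ah - A) * U‖
        ≤ ‖Matrix.diagonal E * (Vᵀ * U)‖ + ‖Vᵀ * (Ah - A) * U‖ := norm_sub_le _ _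
    _ ≤ ε * ‖Vᵀ * U‖ + ε := by
        refine add_le_add ?_ hRband
        calc ‖Matrix.diagonal E * (Vᵀ * U)‖
            ≤ ‖Matrix.diagonal E‖ * ‖Vᵀ * U‖ := Matrix.l2_opNorm_mul _ _
        _ ≤ ε * ‖Vᵀ * U‖ := mul_le_mul_of_nonneg_right hdEnorm (norm_nonneg _)
  have hX2 : ‖Vᵀ * U‖ ≤ 2 * ε / γK := by
    rw [le_div_iff₀ hγK]
    have e1 : 0 ≤ (γK / 2 - ε) * ‖Vᵀ * U‖ := mul_nonneg (by linarith) (norm_nonneg _)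
    have e2 : (γK / 2 - ε) * ‖Vᵀ * U‖
        = γK * ‖Vᵀ * U‖ - ε * ‖Vᵀ * U‖ - (γK / 2) * ‖Vᵀ * U‖ := by ring
    have e3 : ‖Vᵀ * U‖ * γK = 2 * ((γK / 2) * ‖Vᵀ * U‖) := by ring
    linarith [hXlow, hXup, e1, e2, e3]
  ---- STEP D : bound on Y = Uhᵀ (1 - U Uᵀ)
  have hsylD : Uhᵀ * (Ah - A) * (1 - U * Uᵀ)
      = Matrix.diagonal Dh * (Uhᵀ * (1 - U * Uᵀ)) := by
    rw [hAhDecomp, hAU]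
    simp only [Matrix.mul_sub, Matrix.sub_mul, Matrix.mul_add, Matrix.add_mul,
      Matrix.mul_assoc, rUU, rUhUh, rVV, rUhV, rVUh, hU, hUh, hV, hUhV, hVUh,
      Matrix.mul_one, Matrix.one_mul, Matrix.mul_zero, Matrix.zero_mul,
      zero_add, add_zero, zero_sub, sub_zero]
    abel
  have hYband : ‖Matrix.diagonal Dh * (Uhᵀ * (1 - U * Uᵀ))‖ ≤ ε := by
    rw [← hsylD, hεdef]
    calc ‖Uhᵀ * (Ah - A) * (1 - U * Uᵀ)‖ ≤ ‖Uhᵀ * (Ah - A)‖ := DKaux.rproj_le hU _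
    _ ≤ ‖Ah - A‖ := DKaux.lmulT_le hUh _
  have hYlow : (γK - ε) * ‖Uhᵀ * (1 - U * Uᵀ)‖
      ≤ ‖Matrix.diagonal Dh * (Uhᵀ * (1 - U * Uᵀ))‖ :=
    DKaux.diag_mul_lower (Uhᵀ * (1 - U * Uᵀ)) hγε hDh
  have hY2 : ‖Uhᵀ * (1 - U * Uᵀ)‖ ≤ 2 * ε / γK := by
    rw [le_div_iff₀ hγK]
    have e1 : 0 ≤ (γK / 2 - ε) * ‖Uhᵀ * (1 - U * Uᵀ)‖ :=
      mul_nonneg (by linarith) (norm_nonneg _)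
    have e2 : (γK - ε) * ‖Uhᵀ * (1 - U * Uᵀ)‖ - (γK / 2) * ‖Uhᵀ * (1 - U * Uᵀ)‖
        = (γK / 2 - ε) * ‖Uhᵀ * (1 - U * Uᵀ)‖ := by ring
    have e3 : ‖Uhᵀ * (1 - U * Uᵀ)‖ * γK = 2 * ((γK / 2) * ‖Uhᵀ * (1 - U * Uᵀ)‖) := by ring
    linarith [hYlow, hYband, e1, e2, e3]
  ---- STEP Z : bound on Z = (1 - Uh Uhᵀ) U
  have hsylZ : ((1 - Uh * Uhᵀ) * U) * Matrix.diagonal D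
      = (1 - Uh * Uhᵀ) * (A - Ah) * U + V * (Matrix.diagonal E * (Vᵀ * U)) := by
    rw [hAhDecomp, hAU]
    simp only [Matrix.mul_sub, Matrix.sub_mul, Matrix.mul_add, Matrix.add_mul,
      Matrix.mul_assoc, rUU, rUhUh, rVV, rUhV, rVUh, hU, hUh, hV, hUhV, hVUh,
      Matrix.mul_one, Matrix.one_mul, Matrix.mul_zero, Matrix.zero_mul,
      zero_add, add_zero, zero_sub, sub_zero]
    abel
  have hZlow : γK * ‖(1 - Uh * Uhᵀ) * U‖ ≤ ‖((1 - Uh * Uhᵀ) * U) * Matrix.diagonal D‖ :=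
    DKaux.mul_diag_lower _ hγK hD
  have hZup : ‖((1 - Uh * Uhᵀ) * U) * Matrix.diagonal D‖ ≤ ε + ε * ‖Vᵀ * U‖ := by
    rw [hsylZ]
    calc ‖(1 - Uh * Uhᵀ) * (A - Ah) * U + V * (Matrix.diagonal E * (Vᵀ * U))‖
        ≤ ‖(1 - Uh * Uhᵀ) * (A - Ah) * U‖ + ‖V * (Matrix.diagonal E * (Vᵀ * U))‖ :=
          norm_add_le _ _
    _ ≤ ε + ε * ‖Vᵀ * U‖ := by
        refine add_le_add ?_ ?_
        · calc ‖(1 - Uh * Uhᵀ) * (A - Ah) * U‖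
              ≤ ‖(1 - Uh * Uhᵀ) * (A - Ah)‖ := DKaux.rmul_le hU _
          _ ≤ ‖A - Ah‖ := DKaux.lproj_le hUh _
          _ = ε := by rw [hεdef, norm_sub_rev]
        · calc ‖V * (Matrix.diagonal E * (Vᵀ * U))‖
              ≤ ‖Matrix.diagonal E * (Vᵀ * U)‖ := DKaux.lmul_le hV _
          _ ≤ ‖Matrix.diagonal E‖ * ‖Vᵀ * U‖ := Matrix.l2_opNorm_mul _ _
          _ ≤ ε * ‖Vᵀ * U‖ := mul_le_mul_of_nonneg_right hdEnorm (norm_nonneg _)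
  have hZ2 : ‖(1 - Uh * Uhᵀ) * U‖ ≤ 2 * ε / γK := by
    rw [le_div_iff₀ hγK]
    have e1 : ε * ‖Vᵀ * U‖ ≤ ε * (2 * ε / γK) := mul_le_mul_of_nonneg_left hX2 hε0
    have e2 : ε * (2 * ε / γK) ≤ ε := by
      have h21 : 2 * ε / γK ≤ 1 := (div_le_one hγK).mpr (by linarith)
      calc ε * (2 * ε / γK) ≤ ε * 1 := mul_le_mul_of_nonneg_left h21 hε0
      _ = ε := mul_one ε
    have e3 : ‖(1 - Uh * Uhᵀ) * U‖ * γK = γK * ‖(1 - Uh * Uhᵀ) * U‖ := mul_comm _ _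
    linarith [hZlow, hZup, e1, e2, e3]
  ---- STEP E : combine
  have hQP : ‖Uh * Uhᵀ * (1 - U * Uᵀ)‖ ≤ 2 * ε / γK := by
    have hass : Uh * Uhᵀ * (1 - U * Uᵀ) = Uh * (Uhᵀ * (1 - U * Uᵀ)) := Matrix.mul_assoc _ _ _
    rw [hass]
    exact le_trans (DKaux.lmul_le hUh _) hY2
  have hPQ : ‖(1 - Uh * Uhᵀ) * (U * Uᵀ)‖ ≤ 2 * ε / γK := by
    have hass : (1 - Uh * Uhᵀ) * (U * Uᵀ) = ((1 - Uh * Uhᵀ) * U) * Uᵀ :=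
      (Matrix.mul_assoc _ _ _).symm
    rw [hass]
    exact le_trans (DKaux.rmulT_le hU _) hZ2
  have hPP : (U * Uᵀ) * (U * Uᵀ) = U * Uᵀ := by rw [Matrix.mul_assoc, rUU]
  have hQQ : (Uh * Uhᵀ) * (Uh * Uhᵀ) = Uh * Uhᵀ := by rw [Matrix.mul_assoc, rUhUh]
  have h1P : (1 - U * Uᵀ) * (1 - U * Uᵀ) = 1 - U * Uᵀ := by
    simp only [Matrix.mul_sub, Matrix.sub_mul, Matrix.one_mul, Matrix.mul_one, hPP]
    abel
  have hMid : Uh * Uhᵀ - U * Uᵀ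
      = Uh * Uhᵀ * (1 - U * Uᵀ) - (1 - Uh * Uhᵀ) * (U * Uᵀ) := by
    simp only [Matrix.mul_sub, Matrix.sub_mul, Matrix.mul_one, Matrix.one_mul]
    abel
  have hq0 : (Uh * Uhᵀ) * (1 - Uh * Uhᵀ) = 0 := by
    rw [Matrix.mul_sub, Matrix.mul_one, hQQ, sub_self]
  have hQorth : (Uh * Uhᵀ * (1 - U * Uᵀ))ᵀ * ((1 - Uh * Uhᵀ) * (U * Uᵀ)) = 0 := by
    have ht1 : (Uh * Uhᵀ * (1 - U * Uᵀ))ᵀ = (1 - U * Uᵀ) * (Uh * Uhᵀ) := by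
      rw [Matrix.transpose_mul, Matrix.transpose_sub, Matrix.transpose_one,
        Matrix.transpose_mul, Matrix.transpose_transpose, Matrix.transpose_mul,
        Matrix.transpose_transpose]
    rw [ht1, Matrix.mul_assoc (1 - U * Uᵀ) (Uh * Uhᵀ) _,
      ← Matrix.mul_assoc (Uh * Uhᵀ) (1 - Uh * Uhᵀ) (U * Uᵀ), hq0, Matrix.zero_mul,
      Matrix.mul_zero]
  rw [hMid]
  have hc0 : (0:ℝ) ≤ 2 * ε / γK := div_nonneg (by linarith) (le_of_lt hγK)
  refine DKaux.opnorm_le_of_sq _ hc0 fun x => ?_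
  have hsub : (Uh * Uhᵀ * (1 - U * Uᵀ) - (1 - Uh * Uhᵀ) * (U * Uᵀ)) *ᵥ x
      = (Uh * Uhᵀ * (1 - U * Uᵀ)) *ᵥ x - ((1 - Uh * Uhᵀ) * (U * Uᵀ)) *ᵥ x :=
    Matrix.sub_mulVec _ _ _
  have huv : ((Uh * Uhᵀ * (1 - U * Uᵀ)) *ᵥ x) ⬝ᵥ (((1 - Uh * Uhᵀ) * (U * Uᵀ)) *ᵥ x) = 0 := by
    rw [DKaux.dot_mv, hQorth, Matrix.zero_mulVec, dotProduct_zero]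
  have hvu : (((1 - Uh * Uhᵀ) * (U * Uᵀ)) *ᵥ x) ⬝ᵥ ((Uh * Uhᵀ * (1 - U * Uᵀ)) *ᵥ x) = 0 := by
    rw [dotProduct_comm]; exact huv
  have hu2 : (Uh * Uhᵀ * (1 - U * Uᵀ)) *ᵥ x
      = (Uh * Uhᵀ * (1 - U * Uᵀ)) *ᵥ ((1 - U * Uᵀ) *ᵥ x) := by
    rw [Matrix.mulVec_mulVec, Matrix.mul_assoc (Uh * Uhᵀ) (1 - U * Uᵀ) (1 - U * Uᵀ), h1P]
  have hv2 : ((1 - Uh * Uhᵀ) * (U * Uᵀ)) *ᵥ x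
      = ((1 - Uh * Uhᵀ) * (U * Uᵀ)) *ᵥ ((U * Uᵀ) *ᵥ x) := by
    rw [Matrix.mulVec_mulVec, Matrix.mul_assoc (1 - Uh * Uhᵀ) (U * Uᵀ) (U * Uᵀ), hPP]
  have huu : ((Uh * Uhᵀ * (1 - U * Uᵀ)) *ᵥ x) ⬝ᵥ ((Uh * Uhᵀ * (1 - U * Uᵀ)) *ᵥ x)
      ≤ (2 * ε / γK) ^ 2 * (((1 - U * Uᵀ) *ᵥ x) ⬝ᵥ ((1 - U * Uᵀ) *ᵥ x)) := by
    rw [hu2]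
    calc ((Uh * Uhᵀ * (1 - U * Uᵀ)) *ᵥ ((1 - U * Uᵀ) *ᵥ x)) ⬝ᵥ
          ((Uh * Uhᵀ * (1 - U * Uᵀ)) *ᵥ ((1 - U * Uᵀ) *ᵥ x))
        ≤ ‖Uh * Uhᵀ * (1 - U * Uᵀ)‖ ^ 2 * (((1 - U * Uᵀ) *ᵥ x) ⬝ᵥ ((1 - U * Uᵀ) *ᵥ x)) :=
          DKaux.sq_le_opnorm _ _
    _ ≤ (2 * ε / γK) ^ 2 * (((1 - U * Uᵀ) *ᵥ x) ⬝ᵥ ((1 - U * Uᵀ) *ᵥ x)) :=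
        mul_le_mul_of_nonneg_right (pow_le_pow_left₀ (norm_nonneg _) hQP 2)
          (DKaux.dot_self_nonneg _)
  have hvv : (((1 - Uh * Uhᵀ) * (U * Uᵀ)) *ᵥ x) ⬝ᵥ (((1 - Uh * Uhᵀ) * (U * Uᵀ)) *ᵥ x)
      ≤ (2 * ε / γK) ^ 2 * (((U * Uᵀ) *ᵥ x) ⬝ᵥ ((U * Uᵀ) *ᵥ x)) := by
    rw [hv2]
    calc (((1 - Uh * Uhᵀ) * (U * Uᵀ)) *ᵥ ((U * Uᵀ) *ᵥ x)) ⬝ᵥ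
          (((1 - Uh * Uhᵀ) * (U * Uᵀ)) *ᵥ ((U * Uᵀ) *ᵥ x))
        ≤ ‖(1 - Uh * Uhᵀ) * (U * Uᵀ)‖ ^ 2 * (((U * Uᵀ) *ᵥ x) ⬝ᵥ ((U * Uᵀ) *ᵥ x)) :=
          DKaux.sq_le_opnorm _ _
    _ ≤ (2 * ε / γK) ^ 2 * (((U * Uᵀ) *ᵥ x) ⬝ᵥ ((U * Uᵀ) *ᵥ x)) :=
        mul_le_mul_of_nonneg_right (pow_le_pow_left₀ (norm_nonneg _) hPQ 2)
          (DKaux.dot_self_nonneg _)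
  have hyz : (((1 - U * Uᵀ) *ᵥ x) ⬝ᵥ ((1 - U * Uᵀ) *ᵥ x))
      + (((U * Uᵀ) *ᵥ x) ⬝ᵥ ((U * Uᵀ) *ᵥ x)) = x ⬝ᵥ x := by
    have h1 : (1 - U * Uᵀ) *ᵥ x = x - (U * Uᵀ) *ᵥ x := by
      rw [Matrix.sub_mulVec, Matrix.one_mulVec]
    have h2 := DKaux.sub_proj_dot hU x
    have h3 : ((U * Uᵀ) *ᵥ x) ⬝ᵥ ((U * Uᵀ) *ᵥ x) = (Uᵀ *ᵥ x) ⬝ᵥ (Uᵀ *ᵥ x) := by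
      rw [← Matrix.mulVec_mulVec]
      exact DKaux.isometry_sq hU _
    rw [h1, h2, h3]
    ring
  have hexpand : ((Uh * Uhᵀ * (1 - U * Uᵀ) - (1 - Uh * Uhᵀ) * (U * Uᵀ)) *ᵥ x) ⬝ᵥ
        ((Uh * Uhᵀ * (1 - U * Uᵀ) - (1 - Uh * Uhᵀ) * (U * Uᵀ)) *ᵥ x)
      = ((Uh * Uhᵀ * (1 - U * Uᵀ)) *ᵥ x) ⬝ᵥ ((Uh * Uhᵀ * (1 - U * Uᵀ)) *ᵥ x)
        + (((1 - Uh * Uhᵀ) * (U * Uᵀ)) *ᵥ x) ⬝ᵥ (((1 - Uh * Uhᵀ) * (U * Uᵀ)) *ᵥ x) := by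
    rw [hsub, sub_dotProduct, dotProduct_sub, dotProduct_sub, huv, hvu]
    ring
  rw [hexpand]
  have hfin := add_le_add huu hvv
  rw [← mul_add, hyz] at hfin
  exact hfin
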